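/- Let v₁, v₂, v₃ be nonzero real numbers, V₁, V₂, V₃ real numbers and c, c̃ real constants with c ≠ c̃, satisfying the system (⋆). Then V₁ ≠ 0 and Θ ≠ 0, where Θ := −v₁² + v₁⁴ + v₂² − 10v₁²v₂² + 9v₁⁴v₂² + v₂⁴ − 9v₁²v₂⁴. -/
import Mathlib

/-- under the system (⋆) with c ≠ c̃, one has V₁ ≠ 0 and Θ ≠ 0. -/
theorem stmt_5 (v₁ v₂ v₃ V₁ V₂ V₃ c ct : ℝ)
    (hv₁ : v₁ ≠ 0) (hv₂ : v₂ ≠ 0) (hv₃ : v₃ ≠ 0) (hc : c ≠ ct)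
    (h0 : v₁ ^ 2 - v₂ ^ 2 + v₃ ^ 2 = 1)
    (h1 : v₁ * V₁ - v₂ * V₂ + v₃ * V₃ = 0)
    (h2 : V₁ ^ 2 - V₂ ^ 2 + V₃ ^ 2 = c - ct)
    (h3 : V₁ / v₁ + V₂ / v₂ + V₃ / v₃ = 0) :
    V₁ ≠ 0 ∧
    -v₁ ^ 2 + v₁ ^ 4 + v₂ ^ 2 - 10 * v₁ ^ 2 * v₂ ^ 2
      + 9 * v₁ ^ 4 * v₂ ^ 2 + v₂ ^ 4 - 9 * v₁ ^ 2 * v₂ ^ 4 ≠ 0 := by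
  have h3' : v₂ * v₃ * V₁ + v₁ * v₃ * V₂ + v₁ * v₂ * V₃ = 0 := by
    field_simp at h3
    linear_combination h3
  have hS : v₂ ^ 2 + v₃ ^ 2 > 0 := by positivity
  have hvS : v₁ * (v₂ ^ 2 + v₃ ^ 2) ≠ 0 := mul_ne_zero hv₁ (ne_of_gt hS)
  have e2 : v₁ * (v₂ ^ 2 + v₃ ^ 2) * V₂ + v₂ * (v₃ ^ 2 - v₁ ^ 2) * V₁ = 0 := by
    linear_combination v₃ * h3' - v₁ * v₂ * h1
  have e3 : v₁ * (v₂ ^ 2 + v₃ ^ 2) * V₃ + v₃ * (v₁ ^ 2 + v₂ ^ 2) * V₁ = 0 := by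
    linear_combination v₂ * h3' + v₁ * v₃ * h1
  have keyQ : V₁ ^ 2 * (v₁ ^ 2 * (v₂ ^ 2 + v₃ ^ 2) ^ 2
      - v₂ ^ 2 * (v₃ ^ 2 - v₁ ^ 2) ^ 2 + v₃ ^ 2 * (v₁ ^ 2 + v₂ ^ 2) ^ 2)
      = (v₁ * (v₂ ^ 2 + v₃ ^ 2)) ^ 2 * (c - ct) := by
    linear_combination (v₁ * (v₂ ^ 2 + v₃ ^ 2)) ^ 2 * h2
      + (v₁ * (v₂ ^ 2 + v₃ ^ 2) * V₂ - v₂ * (v₃ ^ 2 - v₁ ^ 2) * V₁) * e2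
      - (v₁ * (v₂ ^ 2 + v₃ ^ 2) * V₃ - v₃ * (v₁ ^ 2 + v₂ ^ 2) * V₁) * e3
  constructor
  · intro hV₁
    apply hc
    have hV₂ : V₂ = 0 := by
      have := e2
      rw [hV₁] at this
      have h := mul_eq_zero.mp (by linarith : v₁ * (v₂ ^ 2 + v₃ ^ 2) * V₂ = 0)
      rcases h with h | h
      · exact absurd h hvS
      · exact h
    have hV₃ : V₃ = 0 := by
      have := e3
      rw [hV₁] at this
      have h := mul_eq_zero.mp (by linarith : v₁ * (v₂ ^ 2 + v₃ ^ 2) * V₃ = 0)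
      rcases h with h | h
      · exact absurd h hvS
      · exact h
    have : (0:ℝ) = c - ct := by rw [← h2, hV₁, hV₂, hV₃]; ring
    linarith
  · intro hT
    apply hc
    have hQzero : v₁ ^ 2 * (v₂ ^ 2 + v₃ ^ 2) ^ 2
        - v₂ ^ 2 * (v₃ ^ 2 - v₁ ^ 2) ^ 2 + v₃ ^ 2 * (v₁ ^ 2 + v₂ ^ 2) ^ 2 = 0 := by
      linear_combination (v₁ ^ 2 * v₃ ^ 2 - v₂ ^ 2 * v₃ ^ 2 + 8 * v₁ ^ 2 * v₂ ^ 2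
        + v₁ ^ 2 - v₂ ^ 2) * h0 - hT
    rw [hQzero, mul_zero] at keyQ
    have h := mul_eq_zero.mp keyQ.symm
    rcases h with h | h
    · exact absurd h (pow_ne_zero 2 hvS)
    · linarith
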